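/- Let f be a strategyproof and anonymous two-agent mechanism for an environment with two facilities at ℓ_1 < ℓ_2. For any profile x = (x_1, x_2) with x_1 < x_2, if the open intervals (x_1, x_2) and (ℓ_1, ℓ_2) are disjoint, then both agents are assigned to the same facility: f_1(x) = f_2(x). -/

import Mathlib

/-- Number of agents assigned to facility `j` under assignment `s`
(two agents, two facilities; facility 1 is index `0`, facility 2 is index `1`). -/
def facCount (s : Fin 2 → Fin 2) (j : Fin 2) : ℕ :=
  (Finset.univ.filter fun i => s i = j).card

/-- Cost of an agent with true position `y` under assignment `s`, being agent `i`. -/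
noncomputable def agentCost (ℓ bc : Fin 2 → ℝ) (y : ℝ)
    (s : Fin 2 → Fin 2) (i : Fin 2) : ℝ :=
  |y - ℓ (s i)| + bc (s i) / (facCount s (s i) : ℝ)

/-- A two-agent mechanism is strategyproof if no agent can decrease her (true)
cost by misreporting her position. -/
def Strategyproof (ℓ bc : Fin 2 → ℝ)
    (f : (Fin 2 → ℝ) → Fin 2 → Fin 2) : Prop :=
  ∀ (x : Fin 2 → ℝ) (i : Fin 2) (xi' : ℝ),
    agentCost ℓ bc (x i) (f x) i ≤
      agentCost ℓ bc (x i) (f (Function.update x i xi')) i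

/-- A two-agent mechanism is anonymous: `f(x₂, x₁) = (f₂(x₁,x₂), f₁(x₁,x₂))`. -/
def Anonymous (f : (Fin 2 → ℝ) → Fin 2 → Fin 2) : Prop :=
  ∀ x₁ x₂ : ℝ,
    f ![x₂, x₁] 0 = f ![x₁, x₂] 1 ∧ f ![x₂, x₁] 1 = f ![x₁, x₂] 0

lemma facCount_eq (s : Fin 2 → Fin 2) (j : Fin 2) :
    facCount s j = (if s 0 = j then 1 else 0) + (if s 1 = j then 1 else 0) := by
  rw [facCount, Finset.card_filter, Fin.sum_univ_two]

lemma fin2_third (a b c : Fin 2) (h1 : a ≠ b) (h2 : c ≠ a) : c = b := by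
  fin_cases a <;> fin_cases b <;> fin_cases c <;> simp_all

/-- Property (P4): if the open interval between the two agents is disjoint from
the open interval between the two facilities, both agents are assigned to the
same facility. -/
theorem sp_anonymous_P4 (ℓ bc : Fin 2 → ℝ) (hℓ : ℓ 0 < ℓ 1) (hb : ∀ j, 0 < bc j)
    (f : (Fin 2 → ℝ) → Fin 2 → Fin 2)
    (hsp : Strategyproof ℓ bc f) (han : Anonymous f)
    (x₁ x₂ : ℝ) (hx : x₁ < x₂)
    (hdisj : Set.Ioo x₁ x₂ ∩ Set.Ioo (ℓ 0) (ℓ 1) = ∅) :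
    f ![x₁, x₂] 0 = f ![x₁, x₂] 1 := by
  by_contra hne
  set s1 := f ![x₁, x₂] 0 with hs1
  set s2 := f ![x₁, x₂] 1 with hs2
  -- Both agents lie on the same side of both facilities
  have hcase : x₂ ≤ ℓ 0 ∨ ℓ 1 ≤ x₁ := by
    by_contra h
    push_neg at h
    obtain ⟨h1, h2⟩ := h
    set t := (max x₁ (ℓ 0) + min x₂ (ℓ 1)) / 2 with ht
    have hlt : max x₁ (ℓ 0) < min x₂ (ℓ 1) := by
      simp only [lt_min_iff, max_lt_iff]
      exact ⟨⟨hx, h1⟩, h2, hℓ⟩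
    have ht1 : max x₁ (ℓ 0) < t := by rw [ht]; linarith
    have ht2 : t < min x₂ (ℓ 1) := by rw [ht]; linarith
    have hmem : t ∈ Set.Ioo x₁ x₂ ∩ Set.Ioo (ℓ 0) (ℓ 1) :=
      ⟨⟨lt_of_le_of_lt (le_max_left _ _) ht1, lt_of_lt_of_le ht2 (min_le_left _ _)⟩,
       ⟨lt_of_le_of_lt (le_max_right _ _) ht1, lt_of_lt_of_le ht2 (min_le_right _ _)⟩⟩
    rw [hdisj] at hmem
    exact hmem
  -- anonymity at equal reports
  have haneq : ∀ y : ℝ, f ![y, y] 1 = f ![y, y] 0 := fun y => (han y y).1.symm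
  -- deviations
  have hupd1 : Function.update ![x₁, x₂] 0 x₂ = ![x₂, x₂] := by
    funext i; fin_cases i <;> simp [Function.update]
  have hupd2 : Function.update ![x₁, x₂] 1 x₁ = ![x₁, x₁] := by
    funext i; fin_cases i <;> simp [Function.update]
  have hA := hsp ![x₁, x₂] 0 x₂
  have hB := hsp ![x₁, x₂] 1 x₁
  rw [hupd1] at hA
  rw [hupd2] at hB
  set j := f ![x₂, x₂] 0 with hj
  set k := f ![x₁, x₁] 0 with hk
  -- counts
  have hc1 : facCount (f ![x₁, x₂]) s1 = 1 := by
    rw [facCount_eq, ← hs1, ← hs2, if_pos rfl, if_neg (fun h => hne h.symm)]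
  have hc2 : facCount (f ![x₁, x₂]) s2 = 1 := by
    rw [facCount_eq, ← hs1, ← hs2, if_neg hne, if_pos rfl]
  have hcj : facCount (f ![x₂, x₂]) j = 2 := by
    rw [facCount_eq, haneq x₂, ← hj]
    norm_num
  have hck : facCount (f ![x₁, x₁]) k = 2 := by
    rw [facCount_eq, haneq x₁, ← hk]
    norm_num
  -- rewrite costs
  have hA' : |x₁ - ℓ s1| + bc s1 ≤ |x₁ - ℓ j| + bc j / 2 := by
    have := hA
    unfold agentCost at this
    rw [show (![x₁, x₂] : Fin 2 → ℝ) 0 = x₁ by simp] at this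
    rw [← hs1, hc1, ← hj, hcj] at this
    simpa using this
  have hB' : |x₂ - ℓ s2| + bc s2 ≤ |x₂ - ℓ k| + bc k / 2 := by
    have := hB
    unfold agentCost at this
    rw [show (![x₁, x₂] : Fin 2 → ℝ) 1 = x₂ by simp] at this
    rw [← hs2, hc2, haneq x₁, ← hk, hck] at this
    simpa using this
  -- j ≠ s1, hence j = s2; similarly k = s1
  have hjne : j ≠ s1 := by
    intro h
    rw [h] at hA'
    have := hb s1
    linarith
  have hkne : k ≠ s2 := by
    intro h
    rw [h] at hB'
    have := hb s2
    linarith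
  have hjs2 : j = s2 := fin2_third s1 s2 j hne hjne
  have hks1 : k = s1 := fin2_third s2 s1 k (fun h => hne h.symm) hkne
  rw [hjs2] at hA'
  rw [hks1] at hB'
  -- final contradiction
  have hbs1 := hb s1
  have hbs2 := hb s2
  have hl0 : ∀ m : Fin 2, ℓ 0 ≤ ℓ m := by
    intro m; fin_cases m <;> simp [hℓ.le]
  have hl1 : ∀ m : Fin 2, ℓ m ≤ ℓ 1 := by
    intro m; fin_cases m <;> simp [hℓ.le]
  rcases hcase with hc | hc
  · have e1 : |x₁ - ℓ s1| = ℓ s1 - x₁ := by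
      rw [abs_of_nonpos (by have := hl0 s1; linarith)]; ring
    have e2 : |x₂ - ℓ s2| = ℓ s2 - x₂ := by
      rw [abs_of_nonpos (by have := hl0 s2; linarith)]; ring
    have e3 : |x₁ - ℓ s2| = ℓ s2 - x₁ := by
      rw [abs_of_nonpos (by have := hl0 s2; linarith)]; ring
    have e4 : |x₂ - ℓ s1| = ℓ s1 - x₂ := by
      rw [abs_of_nonpos (by have := hl0 s1; linarith)]; ring
    rw [e1, e3] at hA'
    rw [e2, e4] at hB'
    linarith
  · have e1 : |x₁ - ℓ s1| = x₁ - ℓ s1 := by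
      rw [abs_of_nonneg (by have := hl1 s1; linarith)]
    have e2 : |x₂ - ℓ s2| = x₂ - ℓ s2 := by
      rw [abs_of_nonneg (by have := hl1 s2; linarith)]
    have e3 : |x₁ - ℓ s2| = x₁ - ℓ s2 := by
      rw [abs_of_nonneg (by have := hl1 s2; linarith)]
    have e4 : |x₂ - ℓ s1| = x₂ - ℓ s1 := by
      rw [abs_of_nonneg (by have := hl1 s1; linarith)]
    rw [e1, e3] at hA'
    rw [e2, e4] at hB'
    linarith
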